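/- Let α ∈ (0,2), m ∈ (0,α), ρ_m(x) = (1+|x|²)^{m/2} on ℝ^d, and let A be a d×d real matrix with operator norm ‖A‖. Then for every x ∈ ℝ^d, the generator bound 𝓛_A^{(α)} ρ_m(x) ≤ (2π^{d/2}/Γ(d/2)) · (m/(2−α) + 2^{1+α}/(α−m)) · ‖A‖^α · (1+|x|²)^{(m−α)/2} holds, where 𝓛_A^{(α)} ρ_m(x) = (1/2)∫_{ℝ^d} [ρ_m(x+Az) + ρ_m(x−Az) − 2ρ_m(x)] |z|^{−d−α} dz. -/

import Mathlib

set_option maxHeartbeats 2000000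

open MeasureTheory Real

open Set Metric in
private lemma my_rpow_tangent {p s t : ℝ} (hp0 : 0 ≤ p) (hp1 : p ≤ 1) (hs : 0 ≤ s) (ht : 0 < t) :
    s ^ p ≤ t ^ p + p * t ^ (p - 1) * (s - t) := by
  have h0 : -1 ≤ s / t - 1 := by
    have := div_nonneg hs ht.le; linarith
  have hB := rpow_one_add_le_one_add_mul_self h0 hp0 hp1
  rw [show 1 + (s / t - 1) = s / t by ring] at hB
  have h2 : (s / t) ^ p = s ^ p / t ^ p := div_rpow hs ht.le p
  have htp : 0 < t ^ p := rpow_pos_of_pos ht p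
  have h3 : s ^ p ≤ (1 + p * (s / t - 1)) * t ^ p := by
    rw [← div_le_iff₀ htp, ← h2]; exact hB
  have h4 : t ^ (p - 1) = t ^ p / t := by
    rw [rpow_sub ht, rpow_one]
  calc s ^ p ≤ (1 + p * (s / t - 1)) * t ^ p := h3
    _ = t ^ p + p * (t ^ p / t) * (s - t) := by field_simp
    _ = t ^ p + p * t ^ (p - 1) * (s - t) := by rw [h4]

private lemma my_rpow_subadd {p u v : ℝ} (hu : 0 ≤ u) (hv : 0 ≤ v) (hp0 : 0 ≤ p) (hp1 : p ≤ 1) :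
    (u + v) ^ p ≤ u ^ p + v ^ p := by
  lift u to NNReal using hu
  lift v to NNReal using hv
  have := NNReal.rpow_add_le_add_rpow u v hp0 hp1
  exact_mod_cast this

open Set Metric in

private lemma my_integrableOn_rpow_norm_ball {E : Type*} [NormedAddCommGroup E] [NormedSpace ℝ E]
    [MeasurableSpace E] [BorelSpace E] [FiniteDimensional ℝ E] [Nontrivial E]
    (μ : Measure E) [μ.IsAddHaarMeasure] {t : ℝ}
    (ht : -(Module.finrank ℝ E : ℝ) < t) {R : ℝ} (hR : 0 < R) :
    IntegrableOn (fun z : E => ‖z‖ ^ t) (ball (0 : E) R) μ := by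
  set n := Module.finrank ℝ E with hn
  have hd : 0 < n := Module.finrank_pos
  set A : ℕ → Set E := fun k => ball (0 : E) (R / 2 ^ k) \ ball (0 : E) (R / 2 ^ (k + 1)) with hA
  have hmeas : ∀ k, MeasurableSet (A k) := fun k => measurableSet_ball.diff measurableSet_ball
  set C : ℕ → ℝ := fun k => (R / 2 ^ (k + 1)) ^ t + R ^ t with hC
  have hrk : ∀ k : ℕ, (0 : ℝ) < R / 2 ^ k := fun k => by positivity
  have hCpos : ∀ k, 0 ≤ C k := fun k => by
    have := rpow_nonneg (hrk (k + 1)).le t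
    have := rpow_nonneg hR.le t
    simp only [hC]; linarith
  have hbound : ∀ k, ∀ z ∈ A k, ‖z‖ ^ t ≤ C k := by
    intro k z hz
    obtain ⟨h1, h2⟩ := hz
    rw [mem_ball_zero_iff] at h1
    rw [mem_ball_zero_iff, not_lt] at h2
    rcases le_or_gt 0 t with htp | htn
    · have hle : ‖z‖ ≤ R := by
        refine h1.le.trans (div_le_self hR.le (one_le_pow₀ one_le_two))
      have := rpow_le_rpow (norm_nonneg z) hle htp
      have := rpow_nonneg (hrk (k + 1)).le t
      simp only [hC]; linarith
    · have := rpow_le_rpow_of_nonpos (hrk (k + 1)) h2 htn.le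
      have := rpow_nonneg hR.le t
      simp only [hC]; linarith
  have hfm : Measurable fun z : E => ‖z‖ ^ t := by fun_prop
  have hAfin : ∀ k, μ (A k) < ⊤ := fun k =>
    lt_of_le_of_lt (measure_mono diff_subset) measure_ball_lt_top
  have hint : ∀ k, IntegrableOn (fun z : E => ‖z‖ ^ t) (A k) μ := by
    intro k
    refine Integrable.mono' (g := fun _ => C k)
      (integrableOn_const (hAfin k).ne) hfm.aestronglyMeasurable.restrict ?_
    filter_upwards [ae_restrict_mem (hmeas k)] with z hz
    rw [Real.norm_eq_abs, abs_of_nonneg (rpow_nonneg (norm_nonneg z) t)]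
    exact hbound k z hz
  have hcover : ball (0 : E) R ⊆ (⋃ k, A k) ∪ {0} := by
    intro z hz
    rcases eq_or_ne z 0 with rfl | hz0
    · exact Or.inr rfl
    · left
      rw [mem_ball_zero_iff] at hz
      have hzpos : 0 < ‖z‖ := norm_pos_iff.2 hz0
      have hex : ∃ k : ℕ, R / 2 ^ (k + 1) ≤ ‖z‖ := by
        obtain ⟨k, hk⟩ := pow_unbounded_of_one_lt (R / ‖z‖) (one_lt_two (α := ℝ))
        refine ⟨k, ?_⟩
        rw [div_le_iff₀ (by positivity)]
        rw [div_lt_iff₀ hzpos] at hk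
        nlinarith [pow_pos (zero_lt_two (α := ℝ)) k, pow_succ (2:ℝ) k]
      classical
      refine mem_iUnion.2 ⟨Nat.find hex, ?_, ?_⟩
      · rw [mem_ball_zero_iff]
        rcases Nat.eq_zero_or_pos (Nat.find hex) with h0 | h0
        · rw [h0]; simpa using hz
        · obtain ⟨j, hj⟩ := Nat.exists_eq_succ_of_ne_zero h0.ne'
          have hmin := Nat.find_min hex (m := j) (by omega)
          push_neg at hmin
          rw [hj]
          exact hmin
      · rw [mem_ball_zero_iff, not_lt]
        exact Nat.find_spec hex
  have hpow2 : ∀ (j : ℕ), ((2:ℝ) ^ j) ^ t = ((2:ℝ) ^ t) ^ j := by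
    intro j
    rw [← Real.rpow_natCast (2:ℝ) j, ← Real.rpow_mul (by norm_num : (0:ℝ) ≤ 2), mul_comm,
      Real.rpow_mul (by norm_num : (0:ℝ) ≤ 2), Real.rpow_natCast]
  have hsum : Summable fun k => ∫ z in A k, ‖‖z‖ ^ t‖ ∂μ := by
    set B := (μ (ball (0 : E) 1)).toReal with hB
    have hB0 : 0 ≤ B := ENNReal.toReal_nonneg
    set u := ((2 : ℝ) ^ t)⁻¹ with hu
    have hu0 : 0 < u := by positivity
    set w := ((2 : ℝ) ^ n)⁻¹ with hw
    have hw0 : 0 < w := by positivity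
    have huw1 : u * w < 1 := by
      have h1 : u * w = (2 : ℝ) ^ (-t - (n : ℝ)) := by
        rw [hu, hw, ← Real.rpow_natCast (2:ℝ) n, ← Real.rpow_neg (by norm_num : (0:ℝ) ≤ 2),
          ← Real.rpow_neg (by norm_num : (0:ℝ) ≤ 2), ← Real.rpow_add (by norm_num : (0:ℝ) < 2)]
        ring_nf
      rw [h1]
      exact Real.rpow_lt_one_of_one_lt_of_neg one_lt_two (by linarith)
    have hw1 : w < 1 := by
      rw [hw, inv_lt_one_iff₀]
      right
      exact one_lt_pow₀ one_lt_two hd.ne'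
    have hkey : ∀ (j : ℕ), (R / 2 ^ j) ^ t = R ^ t * u ^ j := by
      intro j
      rw [div_rpow hR.le (by positivity), hpow2, hu, inv_pow, ← div_eq_mul_inv]
    have hkeyn : ∀ (j : ℕ), (R / 2 ^ j) ^ n = R ^ n * w ^ j := by
      intro j
      rw [div_pow, hw, inv_pow, ← pow_mul, ← pow_mul, Nat.mul_comm, ← div_eq_mul_inv]
    have hterm : ∀ k, ∫ z in A k, ‖‖z‖ ^ t‖ ∂μ ≤
        (R ^ t * u * (R ^ n * B)) * (u * w) ^ k + (R ^ t * (R ^ n * B)) * w ^ k := by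
      intro k
      have h1 : ∫ z in A k, ‖‖z‖ ^ t‖ ∂μ ≤ ∫ _z in A k, C k ∂μ := by
        refine integral_mono_of_nonneg (Filter.Eventually.of_forall fun z => norm_nonneg _)
          (integrableOn_const (hAfin k).ne) ?_
        filter_upwards [ae_restrict_mem (hmeas k)] with z hz
        rw [Real.norm_eq_abs, abs_of_nonneg (rpow_nonneg (norm_nonneg z) t)]
        exact hbound k z hz
      have h2 : ∫ _z in A k, C k ∂μ = (μ (A k)).toReal * C k := by
        rw [setIntegral_const]; rfl
      have h3 : (μ (A k)).toReal ≤ (R / 2 ^ k) ^ n * B := by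
        have hsub : μ (A k) ≤ μ (ball (0 : E) (R / 2 ^ k)) := measure_mono diff_subset
        have hball : μ (ball (0 : E) (R / 2 ^ k)) = ENNReal.ofReal ((R / 2 ^ k) ^ n) * μ (ball 0 1) :=
          Measure.addHaar_ball μ 0 (hrk k).le
        calc (μ (A k)).toReal ≤ (μ (ball (0 : E) (R / 2 ^ k))).toReal :=
              ENNReal.toReal_mono measure_ball_lt_top.ne hsub
          _ = (R / 2 ^ k) ^ n * B := by
              rw [hball, ENNReal.toReal_mul, ENNReal.toReal_ofReal (by positivity)]
      have h4 : (μ (A k)).toReal * C k ≤ ((R / 2 ^ k) ^ n * B) * C k :=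
        mul_le_mul_of_nonneg_right h3 (hCpos k)
      have h5 : ((R / 2 ^ k) ^ n * B) * C k =
          (R ^ t * u * (R ^ n * B)) * (u * w) ^ k + (R ^ t * (R ^ n * B)) * w ^ k := by
        simp only [hC]
        rw [hkeyn, hkey]
        ring
      rw [h2] at h1
      rw [h5] at h4
      linarith
    refine Summable.of_nonneg_of_le
      (fun k => integral_nonneg fun z => norm_nonneg _) hterm ?_
    exact ((summable_geometric_of_lt_one (by positivity) huw1).mul_left _).add
      ((summable_geometric_of_lt_one hw0.le hw1).mul_left _)
  have hunion := integrableOn_iUnion_of_summable_integral_norm hint hsum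
  have hsing : IntegrableOn (fun z : E => ‖z‖ ^ t) ({0} : Set E) μ := by
    refine Integrable.mono' (g := fun _ => ‖(0:ℝ) ^ t‖)
      (integrableOn_const isCompact_singleton.measure_lt_top.ne)
      hfm.aestronglyMeasurable.restrict ?_
    filter_upwards [ae_restrict_mem (measurableSet_singleton (0:E))] with z hz
    rw [mem_singleton_iff] at hz
    rw [hz, norm_zero]
  exact ((integrableOn_union).2 ⟨hunion, hsing⟩).mono_set hcover

theorem stmt_5 (d : ℕ) (α m : ℝ) (hα0 : 0 < α) (hα2 : α < 2) (hm0 : 0 < m) (hmα : m < α)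
    (A : EuclideanSpace ℝ (Fin d) →L[ℝ] EuclideanSpace ℝ (Fin d))
    (x : EuclideanSpace ℝ (Fin d)) :
    (1 / 2) * ∫ z : EuclideanSpace ℝ (Fin d),
        ((1 + ‖x + A z‖ ^ 2) ^ (m / 2) + (1 + ‖x - A z‖ ^ 2) ^ (m / 2)
            - 2 * (1 + ‖x‖ ^ 2) ^ (m / 2)) * ‖z‖ ^ (-((d : ℝ) + α))
      ≤ (2 * Real.pi ^ ((d : ℝ) / 2) / Real.Gamma ((d : ℝ) / 2))
          * (m / (2 - α) + 2 ^ (1 + α) / (α - m)) * ‖A‖ ^ α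
          * (1 + ‖x‖ ^ 2) ^ ((m - α) / 2) := by
  classical
  open Set Metric in
  by_cases hA : A = 0
  · -- trivial case: the integrand vanishes and the right-hand side is zero
    have hF0 : (fun z : EuclideanSpace ℝ (Fin d) =>
        ((1 + ‖x + A z‖ ^ 2) ^ (m / 2) + (1 + ‖x - A z‖ ^ 2) ^ (m / 2)
            - 2 * (1 + ‖x‖ ^ 2) ^ (m / 2)) * ‖z‖ ^ (-((d : ℝ) + α)))
        = fun _ => (0 : ℝ) := by
      funext z
      simp only [hA, ContinuousLinearMap.zero_apply, add_zero, sub_zero]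
      ring
    rw [hF0, integral_zero, mul_zero, hA, norm_zero, Real.zero_rpow hα0.ne']
    rw [mul_zero, zero_mul]
  -- main case
  have hAn : 0 < ‖A‖ := norm_pos_iff.2 hA
  have hd0 : 0 < d := by
    rcases Nat.eq_zero_or_pos d with h0 | h0
    · exfalso
      apply hA
      subst h0
      ext z i
      exact absurd i.2 (by omega)
    · exact h0
  haveI : Nonempty (Fin d) := ⟨⟨0, hd0⟩⟩
  haveI : Nontrivial (EuclideanSpace ℝ (Fin d)) := inferInstance
  have hd1 : (1 : ℝ) ≤ (d : ℝ) := by exact_mod_cast hd0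
  set p := m / 2 with hp
  have hp0 : 0 < p := by rw [hp]; linarith
  have hp1 : p ≤ 1 := by rw [hp]; linarith
  set c := ‖x‖ ^ 2 with hc
  have hc0 : (0 : ℝ) ≤ c := by rw [hc]; positivity
  have h1c : (0 : ℝ) < 1 + c := by linarith
  set F : EuclideanSpace ℝ (Fin d) → ℝ := fun z =>
      ((1 + ‖x + A z‖ ^ 2) ^ p + (1 + ‖x - A z‖ ^ 2) ^ p
          - 2 * (1 + c) ^ p) * ‖z‖ ^ (-((d : ℝ) + α)) with hF
  set K1 := m * (1 + c) ^ (p - 1) * ‖A‖ ^ 2 with hK1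
  set K2 := 2 * ‖A‖ ^ m with hK2
  have hK1nn : 0 ≤ K1 := by
    rw [hK1]
    have := rpow_nonneg h1c.le (p - 1)
    positivity
  have hK2nn : 0 ≤ K2 := by
    rw [hK2]
    have := rpow_nonneg (norm_nonneg A) m
    positivity
  set R := Real.sqrt (1 + c) / ‖A‖ with hRdef
  have hRpos : 0 < R := div_pos (Real.sqrt_pos.2 h1c) hAn
  set t1 := 2 - ((d : ℝ) + α) with ht1
  set t2 := m - ((d : ℝ) + α) with ht2
  set g : ℝ → ℝ := fun r => if r < R then K1 * r ^ t1 else K2 * r ^ t2 with hg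
  have hgnn : ∀ r : ℝ, 0 ≤ r → 0 ≤ g r := by
    intro r hr
    rw [hg]
    dsimp only
    split
    · exact mul_nonneg hK1nn (rpow_nonneg hr _)
    · exact mul_nonneg hK2nn (rpow_nonneg hr _)
  have hda : (0 : ℝ) < (d : ℝ) + α := by positivity
  -- pointwise bound
  have key : ∀ z, F z ≤ g ‖z‖ := by
    intro z
    rcases eq_or_ne z 0 with rfl | hz0
    · rw [hF]
      simp only [norm_zero]
      rw [Real.zero_rpow (by linarith : -((d : ℝ) + α) ≠ 0), mul_zero]
      exact hgnn 0 le_rfl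
    have hzpos : 0 < ‖z‖ := norm_pos_iff.2 hz0
    set w := A z with hw
    set a := ‖x + w‖ ^ 2 with ha
    set b := ‖x - w‖ ^ 2 with hb
    set h := ‖w‖ ^ 2 with hh
    have ha0 : (0 : ℝ) ≤ a := by rw [ha]; positivity
    have hb0 : (0 : ℝ) ≤ b := by rw [hb]; positivity
    have hh0 : (0 : ℝ) ≤ h := by rw [hh]; positivity
    have hpar : a + b = 2 * c + 2 * h := by
      have hplw := parallelogram_law_with_norm ℝ x w
      rw [ha, hb, hc, hh]
      rw [pow_two, pow_two, pow_two, pow_two]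
      linarith
    have e1 : (1 + a) ^ p ≤ (1 + (c + h)) ^ p
        + p * (1 + (c + h)) ^ (p - 1) * ((1 + a) - (1 + (c + h))) :=
      my_rpow_tangent hp0.le hp1 (by linarith) (by linarith)
    have e2 : (1 + b) ^ p ≤ (1 + (c + h)) ^ p
        + p * (1 + (c + h)) ^ (p - 1) * ((1 + b) - (1 + (c + h))) :=
      my_rpow_tangent hp0.le hp1 (by linarith) (by linarith)
    have e3 : (1 + (c + h)) ^ p ≤ (1 + c) ^ p + p * (1 + c) ^ (p - 1) * ((1 + (c + h)) - (1 + c)) :=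
      my_rpow_tangent hp0.le hp1 (by linarith) h1c
    rw [show ((1 + (c + h)) - (1 + c)) = h from by ring] at e3
    have ecancel : p * (1 + (c + h)) ^ (p - 1) * ((1 + a) - (1 + (c + h)))
        + p * (1 + (c + h)) ^ (p - 1) * ((1 + b) - (1 + (c + h))) = 0 := by
      have hz : ((1 + a) - (1 + (c + h))) + ((1 + b) - (1 + (c + h))) = 0 := by linarith
      calc p * (1 + (c + h)) ^ (p - 1) * ((1 + a) - (1 + (c + h)))
            + p * (1 + (c + h)) ^ (p - 1) * ((1 + b) - (1 + (c + h)))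
          = p * (1 + (c + h)) ^ (p - 1)
            * (((1 + a) - (1 + (c + h))) + ((1 + b) - (1 + (c + h)))) := by ring
        _ = 0 := by rw [hz, mul_zero]
    have Bsum : (1 + a) ^ p + (1 + b) ^ p ≤ 2 * (1 + (c + h)) ^ p := by linarith
    have hm2p : m = 2 * p := by rw [hp]; ring
    have B1 : (1 + a) ^ p + (1 + b) ^ p - 2 * (1 + c) ^ p ≤ m * (1 + c) ^ (p - 1) * h := by
      rw [hm2p]; linarith
    have B2 : (1 + a) ^ p + (1 + b) ^ p - 2 * (1 + c) ^ p ≤ 2 * h ^ p := by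
      have e4 : (1 + (c + h)) ^ p ≤ (1 + c) ^ p + h ^ p := by
        have := my_rpow_subadd (u := 1 + c) (v := h) h1c.le hh0 hp0.le hp1
        rw [show (1 : ℝ) + c + h = 1 + (c + h) from by ring] at this
        exact this
      linarith
    have hwA : ‖w‖ ≤ ‖A‖ * ‖z‖ := A.le_opNorm z
    have hFz : F z = ((1 + a) ^ p + (1 + b) ^ p - 2 * (1 + c) ^ p) * ‖z‖ ^ (-((d : ℝ) + α)) := rfl
    by_cases hzR : ‖z‖ < R
    · have hW2 : h ≤ ‖A‖ ^ 2 * ‖z‖ ^ 2 := by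
        rw [hh]
        calc ‖w‖ ^ 2 ≤ (‖A‖ * ‖z‖) ^ 2 := by
              apply pow_le_pow_left₀ (norm_nonneg w) hwA
          _ = ‖A‖ ^ 2 * ‖z‖ ^ 2 := by ring
      have hbr : (1 + a) ^ p + (1 + b) ^ p - 2 * (1 + c) ^ p ≤ K1 * ‖z‖ ^ 2 := by
        rw [hK1]
        calc (1 + a) ^ p + (1 + b) ^ p - 2 * (1 + c) ^ p ≤ m * (1 + c) ^ (p - 1) * h := B1
          _ ≤ m * (1 + c) ^ (p - 1) * (‖A‖ ^ 2 * ‖z‖ ^ 2) := by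
              apply mul_le_mul_of_nonneg_left hW2
              have := rpow_nonneg h1c.le (p - 1)
              positivity
          _ = m * (1 + c) ^ (p - 1) * ‖A‖ ^ 2 * ‖z‖ ^ 2 := by ring
      calc F z ≤ (K1 * ‖z‖ ^ 2) * ‖z‖ ^ (-((d : ℝ) + α)) := by
            rw [hFz]
            exact mul_le_mul_of_nonneg_right hbr (rpow_nonneg (norm_nonneg z) _)
        _ = K1 * ‖z‖ ^ t1 := by
            rw [mul_assoc, ← Real.rpow_natCast ‖z‖ 2, ← Real.rpow_add hzpos,
              show ((2 : ℕ) : ℝ) + -((d : ℝ) + α) = t1 from by rw [ht1]; push_cast; ring]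
        _ = g ‖z‖ := by rw [hg]; exact (if_pos hzR).symm
    · have hWp : h ^ p ≤ ‖A‖ ^ m * ‖z‖ ^ m := by
        have h1 : h ≤ (‖A‖ * ‖z‖) ^ 2 := by
          rw [hh]; exact pow_le_pow_left₀ (norm_nonneg w) hwA 2
        have h2 : h ^ p ≤ ((‖A‖ * ‖z‖) ^ 2) ^ p := rpow_le_rpow hh0 h1 hp0.le
        have h3 : (((‖A‖ * ‖z‖) ^ 2 : ℝ)) ^ p = (‖A‖ * ‖z‖) ^ m := by
          rw [← Real.rpow_natCast (‖A‖ * ‖z‖) 2, ← Real.rpow_mul (by positivity)]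
          congr 1
          rw [hp]; push_cast; ring
        rw [h3] at h2
        rwa [Real.mul_rpow (norm_nonneg A) (norm_nonneg z)] at h2
      have hbr : (1 + a) ^ p + (1 + b) ^ p - 2 * (1 + c) ^ p ≤ K2 * ‖z‖ ^ m := by
        rw [hK2]
        calc (1 + a) ^ p + (1 + b) ^ p - 2 * (1 + c) ^ p ≤ 2 * h ^ p := B2
          _ ≤ 2 * (‖A‖ ^ m * ‖z‖ ^ m) := by linarith
          _ = 2 * ‖A‖ ^ m * ‖z‖ ^ m := by ring
      calc F z ≤ (K2 * ‖z‖ ^ m) * ‖z‖ ^ (-((d : ℝ) + α)) := by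
            rw [hFz]
            exact mul_le_mul_of_nonneg_right hbr (rpow_nonneg (norm_nonneg z) _)
        _ = K2 * ‖z‖ ^ t2 := by
            rw [mul_assoc, ← Real.rpow_add hzpos,
              show m + -((d : ℝ) + α) = t2 from by rw [ht2]; ring]
        _ = g ‖z‖ := by rw [hg]; exact (if_neg hzR).symm
  -- integrability of the majorant
  have hfin : Module.finrank ℝ (EuclideanSpace ℝ (Fin d)) = d := by
    simp [finrank_euclideanSpace]
  have hint1 : IntegrableOn (fun z : EuclideanSpace ℝ (Fin d) => K1 * ‖z‖ ^ t1)
      (ball (0 : EuclideanSpace ℝ (Fin d)) R) volume := by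
    refine (my_integrableOn_rpow_norm_ball volume ?_ hRpos).const_mul K1
    rw [hfin, ht1]; linarith
  have hint2 : Integrable (((ball (0 : EuclideanSpace ℝ (Fin d)) R)ᶜ).indicator
      (fun z => K2 * ‖z‖ ^ t2)) volume := by
    set c1 := (R / (1 + R)) ^ t2 with hc1
    have hc1nn : 0 ≤ c1 := rpow_nonneg (by positivity) _
    have hr' : (Module.finrank ℝ (EuclideanSpace ℝ (Fin d)) : ℝ) < (d : ℝ) + α - m := by
      rw [hfin]; linarith
    refine Integrable.mono' ((integrable_one_add_norm hr').const_mul (K2 * c1)) ?_ ?_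
    · exact (Measurable.indicator (by fun_prop) measurableSet_ball.compl).aestronglyMeasurable
    · refine Filter.Eventually.of_forall fun z => ?_
      rw [indicator_apply]
      have hRHS : K2 * c1 * (1 + ‖z‖) ^ (-((d : ℝ) + α - m)) = K2 * (c1 * (1 + ‖z‖) ^ t2) := by
        rw [show -((d : ℝ) + α - m) = t2 from by rw [ht2]; ring]; ring
      by_cases hzin : z ∈ (ball (0 : EuclideanSpace ℝ (Fin d)) R)ᶜ
      · rw [if_pos hzin, Real.norm_eq_abs,
          abs_of_nonneg (mul_nonneg hK2nn (rpow_nonneg (norm_nonneg z) _)), hRHS]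
        refine mul_le_mul_of_nonneg_left ?_ hK2nn
        have hzR : R ≤ ‖z‖ := by
          rw [mem_compl_iff, mem_ball_zero_iff, not_lt] at hzin
          exact hzin
        have hkey2 : R / (1 + R) * (1 + ‖z‖) ≤ ‖z‖ := by
          rw [div_mul_eq_mul_div, div_le_iff₀ (by positivity)]
          nlinarith [norm_nonneg z]
        have ht2neg : t2 ≤ 0 := by rw [ht2]; linarith
        have hstep := rpow_le_rpow_of_nonpos (by positivity) hkey2 ht2neg
        rwa [Real.mul_rpow (by positivity) (by positivity), ← hc1] at hstep
      · rw [if_neg hzin, norm_zero]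
        have : (0:ℝ) ≤ (1 + ‖z‖) ^ (-((d : ℝ) + α - m)) := rpow_nonneg (by positivity) _
        positivity
  have hGint : Integrable (fun z : EuclideanSpace ℝ (Fin d) => g ‖z‖) volume := by
    have heq : (fun z : EuclideanSpace ℝ (Fin d) => g ‖z‖) =
        (fun z => (ball (0 : EuclideanSpace ℝ (Fin d)) R).indicator
            (fun z => K1 * ‖z‖ ^ t1) z
          + ((ball (0 : EuclideanSpace ℝ (Fin d)) R)ᶜ).indicator
            (fun z => K2 * ‖z‖ ^ t2) z) := by
      funext z
      simp only [indicator_apply, mem_compl_iff, mem_ball_zero_iff, hg]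
      by_cases hzR : ‖z‖ < R <;> simp [hzR]
    rw [heq]
    exact (hint1.integrable_indicator measurableSet_ball).add hint2
  -- polar coordinates
  have hvol : ∫ z : EuclideanSpace ℝ (Fin d), g ‖z‖
      = d • (volume (ball (0 : EuclideanSpace ℝ (Fin d)) 1)).toReal
        • ∫ y in Ioi (0 : ℝ), y ^ (d - 1) • g y := by
    rw [integral_fun_norm_addHaar volume g, hfin]; rfl
  have hcongr1 : ∀ y ∈ Ioo (0 : ℝ) R, y ^ (d - 1) • g y = K1 * y ^ (1 - α) := by
    intro y hy
    have hy0 : 0 < y := hy.1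
    rw [smul_eq_mul, hg]
    dsimp only
    rw [if_pos hy.2, ← mul_assoc, mul_comm (y ^ (d-1)) K1, mul_assoc,
      ← Real.rpow_natCast y (d - 1), ← Real.rpow_add hy0,
      show ((d - 1 : ℕ) : ℝ) + t1 = 1 - α from by
        rw [ht1, Nat.cast_sub hd0]; push_cast; ring]
  have hcongr2 : ∀ y ∈ Ici R, y ^ (d - 1) • g y = K2 * y ^ (m - 1 - α) := by
    intro y hy
    have hy0 : 0 < y := lt_of_lt_of_le hRpos hy
    rw [smul_eq_mul, hg]
    dsimp only
    rw [if_neg (not_lt.2 hy), ← mul_assoc, mul_comm (y ^ (d-1)) K2, mul_assoc,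
      ← Real.rpow_natCast y (d - 1), ← Real.rpow_add hy0,
      show ((d - 1 : ℕ) : ℝ) + t2 = m - 1 - α from by
        rw [ht2, Nat.cast_sub hd0]; push_cast; ring]
  have hi1 : IntegrableOn (fun y : ℝ => y ^ (d - 1) • g y) (Ioo (0 : ℝ) R) volume := by
    refine IntegrableOn.congr_fun ?_ (fun y hy => (hcongr1 y hy).symm) measurableSet_Ioo
    exact ((intervalIntegrable_iff_integrableOn_Ioo_of_le hRpos.le).1
      (intervalIntegral.intervalIntegrable_rpow' (by linarith))).const_mul K1
  have hi2 : IntegrableOn (fun y : ℝ => y ^ (d - 1) • g y) (Ici R) volume := by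
    refine IntegrableOn.congr_fun ?_ (fun y hy => (hcongr2 y hy).symm) measurableSet_Ici
    exact IntegrableOn.congr_set_ae
      ((integrableOn_Ioi_rpow_of_lt (show m - 1 - α < -1 by linarith) hRpos).const_mul K2)
      Ioi_ae_eq_Ici.symm
  have hsplit : ∫ y in Ioi (0 : ℝ), y ^ (d - 1) • g y
      = (∫ y in Ioo (0 : ℝ) R, y ^ (d - 1) • g y) + ∫ y in Ici R, y ^ (d - 1) • g y := by
    rw [← Ioo_union_Ici_eq_Ioi hRpos]
    refine setIntegral_union ?_ measurableSet_Ici hi1 hi2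
    exact Set.disjoint_left.2 fun y hy hy2 => absurd hy2 (not_le.2 hy.2)
  have hIoo : ∫ y in Ioo (0 : ℝ) R, y ^ (d - 1) • g y = K1 * (R ^ (2 - α) / (2 - α)) := by
    rw [setIntegral_congr_fun measurableSet_Ioo hcongr1, MeasureTheory.integral_const_mul]
    congr 1
    rw [← MeasureTheory.integral_Ioc_eq_integral_Ioo, ← intervalIntegral.integral_of_le hRpos.le,
      integral_rpow (Or.inl (by linarith)),
      Real.zero_rpow (by linarith : (1 : ℝ) - α + 1 ≠ 0),
      show (1 : ℝ) - α + 1 = 2 - α from by ring]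
    ring
  have hIci : ∫ y in Ici R, y ^ (d - 1) • g y = K2 * (R ^ (m - α) / (α - m)) := by
    rw [setIntegral_congr_fun measurableSet_Ici hcongr2, MeasureTheory.integral_const_mul,
      MeasureTheory.integral_Ici_eq_integral_Ioi,
      integral_Ioi_rpow_of_lt (by linarith) hRpos,
      show m - 1 - α + 1 = m - α from by ring]
    rw [show α - m = -(m - α) from by ring, div_neg, neg_div]
  -- comparison of integrals
  have step1 : ∫ z, F z ≤ ∫ z, (F z ⊔ 0) := by
    by_cases hFi : Integrable F volume
    · exact integral_mono hFi hFi.pos_part fun z => le_sup_left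
    · rw [integral_undef hFi]
      exact integral_nonneg fun z => le_sup_right
  have step2 : ∫ z, (F z ⊔ 0) ≤ ∫ z : EuclideanSpace ℝ (Fin d), g ‖z‖ :=
    integral_mono_of_nonneg (Filter.Eventually.of_forall fun z => le_sup_right)
      hGint (Filter.Eventually.of_forall fun z => sup_le (key z) (hgnn _ (norm_nonneg _)))
  set B := (volume (ball (0 : EuclideanSpace ℝ (Fin d)) 1)).toReal with hB
  have hB0 : 0 ≤ B := ENNReal.toReal_nonneg
  have hval : ∫ z : EuclideanSpace ℝ (Fin d), g ‖z‖
      = (d : ℝ) * B * (K1 * (R ^ (2 - α) / (2 - α)) + K2 * (R ^ (m - α) / (α - m))) := by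
    rw [hvol, hsplit, hIoo, hIci, nsmul_eq_mul, smul_eq_mul]; ring
  have hd2pos : (0 : ℝ) < (d : ℝ) / 2 := by linarith
  have hGammaPos : 0 < Real.Gamma ((d : ℝ) / 2) := Real.Gamma_pos_of_pos hd2pos
  have hGamma1Pos : 0 < Real.Gamma ((d : ℝ) / 2 + 1) := Real.Gamma_pos_of_pos (by linarith)
  have hdne : ((d : ℝ)) ≠ 0 := by linarith
  have hdB : (d : ℝ) * B = 2 * Real.pi ^ ((d : ℝ) / 2) / Real.Gamma ((d : ℝ) / 2) := by
    rw [hB, EuclideanSpace.volume_ball (Fin d) 0 1]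
    simp only [Fintype.card_fin]
    rw [ENNReal.ofReal_one, one_pow, one_mul,
      ENNReal.toReal_ofReal (div_nonneg (by positivity) hGamma1Pos.le)]
    have hsq : (Real.sqrt Real.pi) ^ d = Real.pi ^ ((d : ℝ) / 2) := by
      rw [Real.sqrt_eq_rpow, ← Real.rpow_natCast (Real.pi ^ ((1 : ℝ) / 2)) d,
        ← Real.rpow_mul Real.pi_pos.le]
      congr 1; push_cast; ring
    rw [hsq, Real.Gamma_add_one hd2pos.ne']
    field_simp
  have hRpow : ∀ s : ℝ, R ^ s = (1 + c) ^ (s / 2) / ‖A‖ ^ s := by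
    intro s
    rw [hRdef, Real.div_rpow (Real.sqrt_nonneg _) (norm_nonneg _), Real.sqrt_eq_rpow,
      ← Real.rpow_mul h1c.le, show (1 : ℝ) / 2 * s = s / 2 from by ring]
  have hK1R : K1 * R ^ (2 - α) = m * (‖A‖ ^ α * (1 + c) ^ ((m - α) / 2)) := by
    rw [hRpow, hK1]
    have hcomb : (1 + c) ^ (p - 1) * (1 + c) ^ ((2 - α) / 2) = (1 + c) ^ ((m - α) / 2) := by
      rw [← Real.rpow_add h1c]; congr 1; rw [hp]; ring
    have hAcomb : (‖A‖ ^ 2 : ℝ) / ‖A‖ ^ (2 - α) = ‖A‖ ^ α := by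
      rw [← Real.rpow_natCast ‖A‖ 2, ← Real.rpow_sub hAn]
      congr 1; push_cast; ring
    calc m * (1 + c) ^ (p - 1) * ‖A‖ ^ 2 * ((1 + c) ^ ((2 - α) / 2) / ‖A‖ ^ (2 - α))
        = m * ((1 + c) ^ (p - 1) * (1 + c) ^ ((2 - α) / 2)) * (‖A‖ ^ 2 / ‖A‖ ^ (2 - α)) := by
          ring
      _ = m * (‖A‖ ^ α * (1 + c) ^ ((m - α) / 2)) := by rw [hcomb, hAcomb]; ring
  have hK2R : K2 * R ^ (m - α) = 2 * (‖A‖ ^ α * (1 + c) ^ ((m - α) / 2)) := by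
    rw [hRpow, hK2]
    have hAcomb : (‖A‖ ^ m : ℝ) / ‖A‖ ^ (m - α) = ‖A‖ ^ α := by
      rw [← Real.rpow_sub hAn]; congr 1; ring
    calc 2 * ‖A‖ ^ m * ((1 + c) ^ ((m - α) / 2) / ‖A‖ ^ (m - α))
        = 2 * (‖A‖ ^ m / ‖A‖ ^ (m - α)) * (1 + c) ^ ((m - α) / 2) := by ring
      _ = 2 * (‖A‖ ^ α * (1 + c) ^ ((m - α) / 2)) := by rw [hAcomb]; ring
  set X := ‖A‖ ^ α * (1 + c) ^ ((m - α) / 2) with hX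
  have hX0 : 0 ≤ X := by
    rw [hX]
    exact mul_nonneg (rpow_nonneg (norm_nonneg _) α) (rpow_nonneg h1c.le _)
  have hS0 : 0 ≤ 2 * Real.pi ^ ((d : ℝ) / 2) / Real.Gamma ((d : ℝ) / 2) :=
    div_nonneg (by positivity) hGammaPos.le
  have h2a : (1 : ℝ) ≤ 2 ^ (1 + α) := Real.one_le_rpow one_le_two (by linarith)
  have hval2 : ∫ z : EuclideanSpace ℝ (Fin d), g ‖z‖
      = (2 * Real.pi ^ ((d : ℝ) / 2) / Real.Gamma ((d : ℝ) / 2))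
          * (m * X / (2 - α) + 2 * X / (α - m)) := by
    rw [hval, ← hdB, ← mul_div_assoc, hK1R, ← mul_div_assoc, hK2R, hX]
  have hq : (1 / 2 : ℝ) * (m / (2 - α) + 2 / (α - m)) ≤ m / (2 - α) + 2 ^ (1 + α) / (α - m) := by
    have h1 : 0 ≤ m / (2 - α) := div_nonneg hm0.le (by linarith)
    have h2 : 1 / (α - m) ≤ 2 ^ (1 + α) / (α - m) := by
      gcongr
    have h3 : (1 / 2 : ℝ) * (2 / (α - m)) = 1 / (α - m) := by ring
    linarith
  calc (1 / 2 : ℝ) * ∫ z, F z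
      ≤ (1 / 2 : ℝ) * ∫ z : EuclideanSpace ℝ (Fin d), g ‖z‖ := by
        have hh := step1.trans step2
        linarith
    _ = (2 * Real.pi ^ ((d : ℝ) / 2) / Real.Gamma ((d : ℝ) / 2)) * X
          * ((1 / 2) * (m / (2 - α) + 2 / (α - m))) := by
        rw [hval2]; ring
    _ ≤ (2 * Real.pi ^ ((d : ℝ) / 2) / Real.Gamma ((d : ℝ) / 2)) * X
          * (m / (2 - α) + 2 ^ (1 + α) / (α - m)) := by
        exact mul_le_mul_of_nonneg_left hq (mul_nonneg hS0 hX0)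
    _ = (2 * Real.pi ^ ((d : ℝ) / 2) / Real.Gamma ((d : ℝ) / 2))
          * (m / (2 - α) + 2 ^ (1 + α) / (α - m)) * ‖A‖ ^ α * (1 + c) ^ ((m - α) / 2) := by
        rw [hX]; ring
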